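/- For every integer d with d ≡ 1 (mod 4) and d not a perfect square, there exist positive integers a and b such that (a−b)² − 2(a+b) + 1 = d. -/
import Mathlib

/-- Every non-square integer `d ≡ 1 (mod 4)` is of the form `(a−b)² − 2(a+b) + 1`
for some positive integers `a`, `b`. -/
theorem discriminant_one_mod_four (d : ℤ) (hd : d % 4 = 1) (hns : ¬ ∃ m : ℤ, m ^ 2 = d) :
    ∃ a b : ℤ, 0 < a ∧ 0 < b ∧ (a - b) ^ 2 - 2 * (a + b) + 1 = d := by
  obtain ⟨m, hm⟩ : ∃ m, d = 4 * m + 1 := ⟨(d - 1) / 4, by omega⟩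
  have h0 : 0 ≤ |d| := abs_nonneg d
  have h1 : d ≤ |d| := le_abs_self d
  refine ⟨(|d| + 2) ^ 2 + (|d| + 2) - m, (|d| + 2) ^ 2 - (|d| + 2) - m, ?_, ?_, by ring_nf; linarith⟩
  · nlinarith
  · nlinarith
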